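/- (Pathwise sandwich of the occupancy process between the lower and upper processes.) Fix o ∈ 𝒫^m_{ℓ+1} and any finite sequence r_1,…,r_N ∈ ℛ. Define O^ℓ_0 = O_0 = O^1_0 = o and, for 1 ≤ n ≤ N, O^ℓ_n = Ψ_O^ℓ(O^ℓ_{n−1}, r_n), O_n = Ψ_O(O_{n−1}, r_n), O^1_n = Ψ_O^1(O^1_{n−1}, r_n). Then O^ℓ_n ⪯ O_n ⪯ O^1_n for every 0 ≤ n ≤ N. -/

import Mathlib

open Finset

/-- Lumped sharp peak fitness `A_H`. -/
noncomputable def AH (σ : ℝ) (b : ℕ) : ℝ := if b = 0 then σ else 1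

/-- Mutation coupling map `ℳ_H(b, u₁,…,u_ℓ)`. -/
noncomputable def McoupH (κ ℓ : ℕ) (q : ℝ) (b : ℕ) (u : Fin ℓ → ℝ) : ℕ :=
  b - (univ.filter fun k : Fin ℓ => (k : ℕ) < b ∧ u k < q / ((κ : ℝ) - 1)).card
    + (univ.filter fun k : Fin ℓ => b ≤ (k : ℕ) ∧ 1 - q < u k).card

/-- Selection map `S_O(o,s)`. -/
noncomputable def SO (σ : ℝ) (ℓ : ℕ) (o : ℕ → ℕ) (s : ℝ) : ℕ :=
  sInf {l : ℕ |
    s * ∑ h ∈ range (ℓ + 1), (o h : ℝ) * AH σ h < ∑ h ∈ range (l + 1), (o h : ℝ) * AH σ h}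

/-- Occupancy distribution `𝒪_H(d)` of a distance vector `d`. -/
def occOf {m : ℕ} (d : Fin m → ℕ) (l : ℕ) : ℕ := (univ.filter fun i => d i = l).card

/-- Coupling map `Ψ_O` of the occupancy process. -/
noncomputable def PsiO (κ ℓ m : ℕ) (q σ : ℝ)
    (o : ℕ → ℕ) (r : Fin m → Fin (ℓ + 1) → ℝ) : ℕ → ℕ :=
  occOf (fun i : Fin m => McoupH κ ℓ q (SO σ ℓ o (r i 0)) (fun j => r i j.succ))

/-- The partial order `⪯` on occupancy distributions. -/
def occLE (ℓ : ℕ) (o o' : ℕ → ℕ) : Prop :=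
  ∀ l ≤ ℓ, ∑ h ∈ range (l + 1), o h ≤ ∑ h ∈ range (l + 1), o' h

/-- `π_ℓ(o) = (o(0),0,…,0,m−o(0))`. -/
def piLow (ℓ m : ℕ) (o : ℕ → ℕ) : ℕ → ℕ :=
  fun h => if h = 0 then o 0 else if h = ℓ then m - o 0 else 0

/-- `π_1(o) = (o(0),m−o(0),0,…,0)`. -/
def piUp (m : ℕ) (o : ℕ → ℕ) : ℕ → ℕ :=
  fun h => if h = 0 then o 0 else if h = 1 then m - o 0 else 0

/-- The lower map `Ψ_O^ℓ`. -/
noncomputable def PsiOLow (κ ℓ m : ℕ) (q σ : ℝ)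
    (o : ℕ → ℕ) (r : Fin m → Fin (ℓ + 1) → ℝ) : ℕ → ℕ :=
  if 1 ≤ o 0 then piLow ℓ m (PsiO κ ℓ m q σ (piLow ℓ m o) r)
  else if 1 ≤ PsiO κ ℓ m q σ o r 0 then piLow ℓ m (PsiO κ ℓ m q σ o r)
  else PsiO κ ℓ m q σ o r

/-- The upper map `Ψ_O^1`. -/
noncomputable def PsiOUp (κ ℓ m : ℕ) (q σ : ℝ)
    (o : ℕ → ℕ) (r : Fin m → Fin (ℓ + 1) → ℝ) : ℕ → ℕ :=
  if 1 ≤ o 0 then piUp m (PsiO κ ℓ m q σ (piUp m o) r)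
  else if 1 ≤ PsiO κ ℓ m q σ o r 0 then piUp m (PsiO κ ℓ m q σ o r)
  else PsiO κ ℓ m q σ o r

/-- Iteration of a one-step map driven by a sequence of random inputs:
`chain step o r 0 = o` and `chain step o r n = step (chain step o r (n−1)) (r n)`. -/
def chain {α β : Type*} (step : α → β → α) (o : α) (r : ℕ → β) : ℕ → α
  | 0 => o
  | n + 1 => step (chain step o r n) (r (n + 1))

/-! ### Auxiliary lemmas -/

/-- Validity of an occupancy distribution. -/
def OKocc (ℓ m : ℕ) (o : ℕ → ℕ) : Prop :=
  (∀ h, ℓ < h → o h = 0) ∧ ∑ h ∈ range (ℓ + 1), o h = m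

lemma occLE_refl (ℓ : ℕ) (o : ℕ → ℕ) : occLE ℓ o o := fun _ _ => le_rfl

lemma occLE_trans {ℓ : ℕ} {o1 o2 o3 : ℕ → ℕ} (h1 : occLE ℓ o1 o2) (h2 : occLE ℓ o2 o3) :
    occLE ℓ o1 o3 := fun l hl => (h1 l hl).trans (h2 l hl)

lemma OKocc.o0_le {ℓ m : ℕ} {o : ℕ → ℕ} (ho : OKocc ℓ m o) : o 0 ≤ m := by
  rw [← ho.2]
  exact Finset.single_le_sum (f := o) (fun _ _ => Nat.zero_le _)
    (mem_range.mpr (Nat.succ_pos ℓ))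

lemma sum_AH (σ : ℝ) (o : ℕ → ℕ) (l : ℕ) :
    ∑ h ∈ range (l + 1), (o h : ℝ) * AH σ h
      = ((∑ h ∈ range (l + 1), o h : ℕ) : ℝ) + (σ - 1) * o 0 := by
  have h : ∀ h ∈ range (l + 1), (o h : ℝ) * AH σ h
      = (o h : ℝ) + (if h = 0 then (σ - 1) * o 0 else 0) := by
    intro h _
    by_cases h0 : h = 0
    · subst h0; simp [AH]; ring
    · simp [AH, h0]
  rw [Finset.sum_congr rfl h, Finset.sum_add_distrib,
    Finset.sum_ite_eq' (range (l + 1)) 0 (fun _ => (σ - 1) * o 0)]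
  simp [mem_range, Nat.succ_pos]

lemma SO_spec {ℓ m : ℕ} {σ : ℝ} (hσ : 1 < σ) (hm : 1 ≤ m) {o : ℕ → ℕ}
    (ho : ∑ h ∈ range (ℓ + 1), o h = m) {s : ℝ} (hs0 : 0 ≤ s) (hs1 : s < 1) :
    SO σ ℓ o s ≤ ℓ ∧
      s * ∑ h ∈ range (ℓ + 1), (o h : ℝ) * AH σ h
        < ∑ h ∈ range (SO σ ℓ o s + 1), (o h : ℝ) * AH σ h := by
  have ha : (0:ℝ) ≤ (σ - 1) * o 0 := by
    have : (0:ℝ) ≤ (o 0 : ℝ) := Nat.cast_nonneg _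
    nlinarith
  have hm' : (1:ℝ) ≤ (m:ℝ) := by exact_mod_cast hm
  have hT : (0:ℝ) < ∑ h ∈ range (ℓ + 1), (o h : ℝ) * AH σ h := by
    rw [sum_AH, ho]; linarith
  have hmem : ℓ ∈ {l : ℕ |
      s * ∑ h ∈ range (ℓ + 1), (o h : ℝ) * AH σ h
        < ∑ h ∈ range (l + 1), (o h : ℝ) * AH σ h} := by
    simp only [Set.mem_setOf_eq]
    nlinarith
  exact ⟨Nat.sInf_le hmem, Nat.sInf_mem (⟨ℓ, hmem⟩ : Set.Nonempty _)⟩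

lemma SO_mono {ℓ m : ℕ} {σ : ℝ} (hσ : 1 < σ) (hm : 1 ≤ m) {o o' : ℕ → ℕ}
    (ho : OKocc ℓ m o) (ho' : OKocc ℓ m o') (hle : occLE ℓ o o')
    {s : ℝ} (hs0 : 0 ≤ s) (hs1 : s < 1) :
    SO σ ℓ o' s ≤ SO σ ℓ o s := by
  obtain ⟨hbl, hcond⟩ := SO_spec hσ hm ho.2 hs0 hs1
  set b := SO σ ℓ o s with hbdef
  apply Nat.sInf_le
  simp only [Set.mem_setOf_eq]
  -- notation
  set P : ℝ := ((∑ h ∈ range (b + 1), o h : ℕ) : ℝ) with hP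
  set P' : ℝ := ((∑ h ∈ range (b + 1), o' h : ℕ) : ℝ) with hP'
  set a : ℝ := (σ - 1) * o 0 with haa
  set a' : ℝ := (σ - 1) * o' 0 with haa'
  have hcond' : s * ((m:ℝ) + a) < P + a := by
    rw [sum_AH, sum_AH, ho.2] at hcond; exact hcond
  have hPP' : P ≤ P' := by
    have := hle b hbl
    rw [hP, hP']; exact_mod_cast this
  have hP'm : P' ≤ (m:ℝ) := by
    have h1 : ∑ h ∈ range (b + 1), o' h ≤ ∑ h ∈ range (ℓ + 1), o' h :=
      Finset.sum_le_sum_of_subset (Finset.range_subset_range.2 (by omega))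
    rw [hP', ← ho'.2]; exact_mod_cast h1
  have ha0 : (0:ℝ) ≤ a := by
    have : (0:ℝ) ≤ (o 0 : ℝ) := Nat.cast_nonneg _
    nlinarith
  have haa2 : a ≤ a' := by
    have h0 : o 0 ≤ o' 0 := by simpa using hle 0 (Nat.zero_le ℓ)
    have h0' : (o 0 : ℝ) ≤ (o' 0 : ℝ) := by exact_mod_cast h0
    nlinarith
  have hm' : (1:ℝ) ≤ (m:ℝ) := by exact_mod_cast hm
  have hP0 : (0:ℝ) ≤ P := Nat.cast_nonneg _
  have hPm : P ≤ (m:ℝ) := le_trans hPP' hP'm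
  have h2 : (P + a) * ((m:ℝ) + a') ≤ (P' + a') * ((m:ℝ) + a) := by
    nlinarith [mul_nonneg (by linarith : (0:ℝ) ≤ (m:ℝ) + a) (by linarith : (0:ℝ) ≤ P' - P),
      mul_nonneg (by linarith : (0:ℝ) ≤ (m:ℝ) - P) (by linarith : (0:ℝ) ≤ a' - a)]
  have h3 : s * ((m:ℝ) + a') * ((m:ℝ) + a) < (P' + a') * ((m:ℝ) + a) := by
    nlinarith [mul_lt_mul_of_pos_right hcond' (by linarith : (0:ℝ) < (m:ℝ) + a')]
  have h4 : s * ((m:ℝ) + a') < P' + a' :=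
    lt_of_mul_lt_mul_right h3 (by linarith)
  rw [sum_AH, sum_AH, ho'.2]
  exact h4

lemma card_filter_lt_fin (ℓ b : ℕ) (hb : b ≤ ℓ) :
    (univ.filter fun k : Fin ℓ => (k : ℕ) < b).card = b := by
  rcases eq_or_lt_of_le hb with rfl | h
  · have h1 : (univ.filter fun k : Fin b => (k : ℕ) < b) = univ := by
      apply Finset.filter_eq_self.2
      intro k _
      exact k.isLt
    rw [h1, card_univ, Fintype.card_fin]
  · have h1 : (univ.filter fun k : Fin ℓ => (k : ℕ) < b) = Finset.Iio (⟨b, h⟩ : Fin ℓ) := by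
      ext k
      simp [Fin.lt_def]
    rw [h1, Fin.card_Iio]

/-- The alternative "filter" form of the mutation coupling map. -/
lemma Mcoup_eq {κ ℓ : ℕ} {q : ℝ} {b : ℕ} (hb : b ≤ ℓ) (u : Fin ℓ → ℝ) :
    McoupH κ ℓ q b u =
      (univ.filter fun k : Fin ℓ =>
        ((k : ℕ) < b → ¬ (u k < q / ((κ : ℝ) - 1))) ∧ (b ≤ (k : ℕ) → 1 - q < u k)).card := by
  classical
  unfold McoupH
  have hsub : (univ.filter fun k : Fin ℓ => (k : ℕ) < b ∧ u k < q / ((κ : ℝ) - 1))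
      ⊆ (univ.filter fun k : Fin ℓ => (k : ℕ) < b) := by
    intro k hk
    simp only [mem_filter, mem_univ, true_and] at hk ⊢
    exact hk.1
  have h2 : b - (univ.filter fun k : Fin ℓ =>
        (k : ℕ) < b ∧ u k < q / ((κ : ℝ) - 1)).card
      = ((univ.filter fun k : Fin ℓ => (k : ℕ) < b) \
          (univ.filter fun k : Fin ℓ => (k : ℕ) < b ∧ u k < q / ((κ : ℝ) - 1))).card := by
    rw [card_sdiff_of_subset hsub, card_filter_lt_fin ℓ b hb]
  rw [h2, ← Finset.card_union_of_disjoint (by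
    rw [Finset.disjoint_left]
    intro k hk hk'
    simp only [mem_sdiff, mem_filter, mem_univ, true_and] at hk hk'
    omega)]
  congr 1
  ext k
  simp only [mem_union, mem_sdiff, mem_filter, mem_univ, true_and]
  by_cases hk : (k : ℕ) < b
  · have hnk : ¬ b ≤ (k : ℕ) := by omega
    simp [hk, hnk]
  · have hnk : b ≤ (k : ℕ) := by omega
    simp [hk, hnk]

lemma Mcoup_mono {κ ℓ : ℕ} {q : ℝ} (hc : q / ((κ : ℝ) - 1) < 1 - q)
    {b b' : ℕ} (hbb : b ≤ b') (hb' : b' ≤ ℓ) (u : Fin ℓ → ℝ) :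
    McoupH κ ℓ q b u ≤ McoupH κ ℓ q b' u := by
  rw [Mcoup_eq (hbb.trans hb') u, Mcoup_eq hb' u]
  apply Finset.card_le_card
  intro k hk
  simp only [mem_filter, mem_univ, true_and] at hk ⊢
  obtain ⟨hk1, hk2⟩ := hk
  constructor
  · intro hlt
    by_cases hkb : (k : ℕ) < b
    · exact hk1 hkb
    · have hbig := hk2 (by omega)
      intro hsmall
      linarith
  · intro hge
    exact hk2 (by omega)

lemma Mcoup_le {κ ℓ : ℕ} {q : ℝ} {b : ℕ} (hb : b ≤ ℓ) (u : Fin ℓ → ℝ) :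
    McoupH κ ℓ q b u ≤ ℓ := by
  rw [Mcoup_eq hb u]
  calc (univ.filter _).card ≤ (univ : Finset (Fin ℓ)).card := Finset.card_filter_le _ _
    _ = ℓ := by rw [card_univ, Fintype.card_fin]

lemma occOf_partial {m : ℕ} (d : Fin m → ℕ) (l : ℕ) :
    ∑ h ∈ range (l + 1), occOf d h = (univ.filter fun i => d i ≤ l).card := by
  classical
  rw [Finset.card_eq_sum_card_fiberwise (f := d) (t := range (l + 1)) (fun i hi => by
    simp only [mem_coe, mem_filter, mem_univ, true_and] at hi
    exact mem_range.mpr (Nat.lt_succ_of_le hi))]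
  refine Finset.sum_congr rfl fun h hh => ?_
  rw [mem_range, Nat.lt_succ_iff] at hh
  unfold occOf
  congr 1
  ext i
  simp only [mem_filter, mem_univ, true_and, Finset.filter_filter]
  exact ⟨fun hd => ⟨by omega, hd⟩, fun hd => hd.2⟩

lemma PsiO_d_le {κ ℓ m : ℕ} {q σ : ℝ} (hσ : 1 < σ) (hm : 1 ≤ m) {o : ℕ → ℕ}
    (ho : ∑ h ∈ range (ℓ + 1), o h = m) {r : Fin m → Fin (ℓ + 1) → ℝ}
    (hrr : ∀ i j, 0 ≤ r i j ∧ r i j < 1) (i : Fin m) :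
    McoupH κ ℓ q (SO σ ℓ o (r i 0)) (fun j => r i j.succ) ≤ ℓ :=
  Mcoup_le (SO_spec hσ hm ho (hrr i 0).1 (hrr i 0).2).1 _

lemma PsiO_OK {κ ℓ m : ℕ} {q σ : ℝ} (hσ : 1 < σ) (hm : 1 ≤ m) {o : ℕ → ℕ}
    (ho : OKocc ℓ m o) {r : Fin m → Fin (ℓ + 1) → ℝ}
    (hrr : ∀ i j, 0 ≤ r i j ∧ r i j < 1) :
    OKocc ℓ m (PsiO κ ℓ m q σ o r) := by
  have hd := PsiO_d_le (κ := κ) (q := q) hσ hm ho.2 hrr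
  constructor
  · intro l hl
    unfold PsiO occOf
    rw [Finset.card_eq_zero, Finset.filter_eq_empty_iff]
    intro i _
    show ¬ McoupH κ ℓ q (SO σ ℓ o (r i 0)) (fun j => r i j.succ) = l
    have := hd i
    omega
  · unfold PsiO
    rw [occOf_partial]
    have h1 : (univ.filter fun i : Fin m =>
        McoupH κ ℓ q (SO σ ℓ o (r i 0)) (fun j => r i j.succ) ≤ ℓ) = univ :=
      Finset.filter_eq_self.2 fun i _ => hd i
    rw [h1, card_univ, Fintype.card_fin]

lemma PsiO_mono {κ ℓ m : ℕ} {q σ : ℝ} (hσ : 1 < σ) (hm : 1 ≤ m)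
    (hc : q / ((κ : ℝ) - 1) < 1 - q) {o o' : ℕ → ℕ}
    (ho : OKocc ℓ m o) (ho' : OKocc ℓ m o') (hle : occLE ℓ o o')
    {r : Fin m → Fin (ℓ + 1) → ℝ} (hrr : ∀ i j, 0 ≤ r i j ∧ r i j < 1) :
    occLE ℓ (PsiO κ ℓ m q σ o r) (PsiO κ ℓ m q σ o' r) := by
  intro l _
  unfold PsiO
  rw [occOf_partial, occOf_partial]
  apply Finset.card_le_card
  intro i hi
  simp only [mem_filter, mem_univ, true_and] at hi ⊢
  refine le_trans (Mcoup_mono hc ?_ ?_ _) hi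
  · exact SO_mono hσ hm ho ho' hle (hrr i 0).1 (hrr i 0).2
  · exact (SO_spec hσ hm ho.2 (hrr i 0).1 (hrr i 0).2).1

lemma piLow_sum {ℓ m : ℕ} (hℓ : 1 ≤ ℓ) {o : ℕ → ℕ} (ho0 : o 0 ≤ m) {l : ℕ} (hl : l ≤ ℓ) :
    ∑ h ∈ range (l + 1), piLow ℓ m o h = if l < ℓ then o 0 else m := by
  have hfun : ∀ h ∈ range (l + 1), piLow ℓ m o h
      = (if h = 0 then o 0 else 0) + (if h = ℓ then m - o 0 else 0) := by
    intro h _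
    unfold piLow
    by_cases h0 : h = 0
    · subst h0
      have : (0:ℕ) ≠ ℓ := by omega
      simp [this]
    · by_cases h1 : h = ℓ <;> simp [h0, h1, show ℓ ≠ 0 by omega]
  rw [Finset.sum_congr rfl hfun, Finset.sum_add_distrib,
    Finset.sum_ite_eq' (range (l + 1)) 0 (fun _ => o 0),
    Finset.sum_ite_eq' (range (l + 1)) ℓ (fun _ => m - o 0)]
  rcases lt_or_eq_of_le hl with h | h
  · have h2 : ¬ ℓ ∈ range (l + 1) := by simp [mem_range]; omega
    simp [mem_range, h, h2]
  · subst h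
    simp [mem_range]
    omega

lemma piUp_sum {ℓ m : ℕ} (hℓ : 1 ≤ ℓ) {o : ℕ → ℕ} (ho0 : o 0 ≤ m) {l : ℕ} (hl : l ≤ ℓ) :
    ∑ h ∈ range (l + 1), piUp m o h = if l = 0 then o 0 else m := by
  have hfun : ∀ h ∈ range (l + 1), piUp m o h
      = (if h = 0 then o 0 else 0) + (if h = 1 then m - o 0 else 0) := by
    intro h _
    unfold piUp
    by_cases h0 : h = 0
    · subst h0; simp
    · by_cases h1 : h = 1 <;> simp [h0, h1]
  rw [Finset.sum_congr rfl hfun, Finset.sum_add_distrib,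
    Finset.sum_ite_eq' (range (l + 1)) 0 (fun _ => o 0),
    Finset.sum_ite_eq' (range (l + 1)) 1 (fun _ => m - o 0)]
  rcases Nat.eq_zero_or_pos l with h | h
  · subst h
    simp [mem_range]
  · have h2 : (1:ℕ) ∈ range (l + 1) := by simp [mem_range]; omega
    have h3 : l ≠ 0 := by omega
    simp [mem_range, h2, h3]
    omega

lemma OK_piLow {ℓ m : ℕ} (hℓ : 1 ≤ ℓ) {o : ℕ → ℕ} (ho : OKocc ℓ m o) :
    OKocc ℓ m (piLow ℓ m o) := by
  constructor
  · intro h hh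
    unfold piLow
    have h1 : h ≠ 0 := by omega
    have h2 : h ≠ ℓ := by omega
    simp [h1, h2]
  · rw [piLow_sum hℓ ho.o0_le le_rfl]
    simp

lemma OK_piUp {ℓ m : ℕ} (hℓ : 1 ≤ ℓ) {o : ℕ → ℕ} (ho : OKocc ℓ m o) :
    OKocc ℓ m (piUp m o) := by
  constructor
  · intro h hh
    unfold piUp
    have h1 : h ≠ 0 := by omega
    have h2 : h ≠ 1 := by omega
    simp [h1, h2]
  · rw [piUp_sum hℓ ho.o0_le le_rfl]
    simp
    omega

lemma occLE_piLow {ℓ m : ℕ} (hℓ : 1 ≤ ℓ) {o : ℕ → ℕ} (ho : OKocc ℓ m o) :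
    occLE ℓ (piLow ℓ m o) o := by
  intro l hl
  rw [piLow_sum hℓ ho.o0_le hl]
  split_ifs with h
  · exact Finset.single_le_sum (f := o) (fun _ _ => Nat.zero_le _)
      (mem_range.mpr (Nat.succ_pos l))
  · have : l = ℓ := by omega
    subst this
    rw [ho.2]

lemma occLE_piUp {ℓ m : ℕ} (hℓ : 1 ≤ ℓ) {o : ℕ → ℕ} (ho : OKocc ℓ m o) :
    occLE ℓ o (piUp m o) := by
  intro l hl
  rw [piUp_sum hℓ ho.o0_le hl]
  split_ifs with h
  · subst h
    simp
  · rw [← ho.2]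
    exact Finset.sum_le_sum_of_subset (Finset.range_subset_range.2 (by omega))
/-- Pathwise sandwich of the occupancy process between the lower and upper
processes: started from the same occupancy distribution and driven by the same
random inputs `r_1,…,r_N`, one has `O^ℓ_n ⪯ O_n ⪯ O^1_n` for all `0 ≤ n ≤ N`. -/
theorem occupancy_sandwich (κ ℓ m : ℕ) (hκ : 2 ≤ κ) (hℓ : 1 ≤ ℓ) (hm : 1 ≤ m)
    (q σ : ℝ) (hq0 : 0 < q) (hq1 : q < 1 - 1 / κ) (hσ : 1 < σ)
    (o : ℕ → ℕ) (hov : ∀ h, ℓ < h → o h = 0) (ho : ∑ h ∈ range (ℓ + 1), o h = m)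
    (N : ℕ) (r : ℕ → Fin m → Fin (ℓ + 1) → ℝ)
    (hr : ∀ n, 1 ≤ n → n ≤ N → ∀ i j, 0 ≤ r n i j ∧ r n i j < 1) :
    ∀ n ≤ N,
      occLE ℓ (chain (PsiOLow κ ℓ m q σ) o r n) (chain (PsiO κ ℓ m q σ) o r n) ∧
      occLE ℓ (chain (PsiO κ ℓ m q σ) o r n) (chain (PsiOUp κ ℓ m q σ) o r n) := by
  have hc : q / ((κ : ℝ) - 1) < 1 - q := by
    have hκ' : (2:ℝ) ≤ (κ:ℝ) := by exact_mod_cast hκ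
    have hκ0 : (0:ℝ) < (κ:ℝ) := by linarith
    have h1 : (1:ℝ) / κ * κ = 1 := by field_simp
    rw [div_lt_iff₀ (by linarith)]
    nlinarith [mul_lt_mul_of_pos_right hq1 hκ0]
  suffices H : ∀ n, n ≤ N →
      OKocc ℓ m (chain (PsiOLow κ ℓ m q σ) o r n) ∧
      OKocc ℓ m (chain (PsiO κ ℓ m q σ) o r n) ∧
      OKocc ℓ m (chain (PsiOUp κ ℓ m q σ) o r n) ∧
      occLE ℓ (chain (PsiOLow κ ℓ m q σ) o r n) (chain (PsiO κ ℓ m q σ) o r n) ∧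
      occLE ℓ (chain (PsiO κ ℓ m q σ) o r n) (chain (PsiOUp κ ℓ m q σ) o r n) by
    intro n hn
    exact ⟨(H n hn).2.2.2.1, (H n hn).2.2.2.2⟩
  intro n
  induction n with
  | zero =>
    intro _
    exact ⟨⟨hov, ho⟩, ⟨hov, ho⟩, ⟨hov, ho⟩, occLE_refl ℓ o, occLE_refl ℓ o⟩
  | succ n ih =>
    intro hn
    obtain ⟨hL, hM, hU, h1, h2⟩ := ih (by omega)
    set oL := chain (PsiOLow κ ℓ m q σ) o r n with hoL
    set oM := chain (PsiO κ ℓ m q σ) o r n with hoM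
    set oU := chain (PsiOUp κ ℓ m q σ) o r n with hoU
    have hrn : ∀ i j, 0 ≤ r (n + 1) i j ∧ r (n + 1) i j < 1 :=
      hr (n + 1) (by omega) hn
    have hΨM : OKocc ℓ m (PsiO κ ℓ m q σ oM (r (n + 1))) := PsiO_OK hσ hm hM hrn
    have stepLow : OKocc ℓ m (PsiOLow κ ℓ m q σ oL (r (n + 1))) ∧
        occLE ℓ (PsiOLow κ ℓ m q σ oL (r (n + 1))) (PsiO κ ℓ m q σ oM (r (n + 1))) := by
      unfold PsiOLow
      split_ifs with hb1 hb2
      · have hOKp : OKocc ℓ m (piLow ℓ m oL) := OK_piLow hℓ hL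
        have hOKΨ : OKocc ℓ m (PsiO κ ℓ m q σ (piLow ℓ m oL) (r (n + 1))) :=
          PsiO_OK hσ hm hOKp hrn
        refine ⟨OK_piLow hℓ hOKΨ, occLE_trans (occLE_piLow hℓ hOKΨ) ?_⟩
        exact PsiO_mono hσ hm hc hOKp hM (occLE_trans (occLE_piLow hℓ hL) h1) hrn
      · have hOKΨ : OKocc ℓ m (PsiO κ ℓ m q σ oL (r (n + 1))) := PsiO_OK hσ hm hL hrn
        exact ⟨OK_piLow hℓ hOKΨ, occLE_trans (occLE_piLow hℓ hOKΨ)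
          (PsiO_mono hσ hm hc hL hM h1 hrn)⟩
      · exact ⟨PsiO_OK hσ hm hL hrn, PsiO_mono hσ hm hc hL hM h1 hrn⟩
    have stepUp : OKocc ℓ m (PsiOUp κ ℓ m q σ oU (r (n + 1))) ∧
        occLE ℓ (PsiO κ ℓ m q σ oM (r (n + 1))) (PsiOUp κ ℓ m q σ oU (r (n + 1))) := by
      unfold PsiOUp
      split_ifs with hb1 hb2
      · have hOKp : OKocc ℓ m (piUp m oU) := OK_piUp hℓ hU
        have hOKΨ : OKocc ℓ m (PsiO κ ℓ m q σ (piUp m oU) (r (n + 1))) :=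
          PsiO_OK hσ hm hOKp hrn
        refine ⟨OK_piUp hℓ hOKΨ, occLE_trans ?_ (occLE_piUp hℓ hOKΨ)⟩
        exact PsiO_mono hσ hm hc hM hOKp (occLE_trans h2 (occLE_piUp hℓ hU)) hrn
      · have hOKΨ : OKocc ℓ m (PsiO κ ℓ m q σ oU (r (n + 1))) := PsiO_OK hσ hm hU hrn
        exact ⟨OK_piUp hℓ hOKΨ, occLE_trans (PsiO_mono hσ hm hc hM hU h2 hrn)
          (occLE_piUp hℓ hOKΨ)⟩
      · exact ⟨PsiO_OK hσ hm hU hrn, PsiO_mono hσ hm hc hM hU h2 hrn⟩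
    exact ⟨stepLow.1, hΨM, stepUp.1, stepLow.2, stepUp.2⟩
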